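/- Let U be a 4×4 complex matrix written in 2×2 blocks as U = fromBlocks U₁₁ U₁₂ U₂₁ U₂₂. Fix k, m, n with n ≥ 1 and m + n ≤ k, write A^{(j)} := I_{2^{j−1}} ⊗ A, and define U_{(k;m,m+n)} := I_{2^{m−1}} ⊗ fromBlocks U₁₁^{(n)} U₁₂^{(n)} U₂₁^{(n)} U₂₂^{(n)} ⊗ I_{2^{k−m−n}}, and Λ_U^{(n+1)} := fromBlocks (I_{2^{n−1}} ⊗ (U₂₁† P₁ U₂₁)) (I_{2^{n−1}} ⊗ (U₂₁† P₁ U₂₂)) (I_{2^{n−1}} ⊗ (U₂₂† P₁ U₂₁)) (I_{2^{n−1}} ⊗ (U₂₂† P₁ U₂₂)). Then for every 2^k × 2^k complex matrix ρ, Tr[(P₁^{(m)} ⊗ P₁^{(n)} ⊗ I_{2^{k−m−n}}) · U_{(k;m,m+n)} · ρ · U_{(k;m,m+n)}†] = Tr[(I_{2^{m−1}} ⊗ Λ_U^{(n+1)} ⊗ I_{2^{k−m−n}}) · ρ]. -/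

import Mathlib

open Matrix Kronecker

noncomputable def P1 : Matrix (Fin 2) (Fin 2) ℂ := Matrix.single 1 1 1

/-- The canonical identification of a qubit index `q : Fin 2` together with remaining
indices `x : α` with an element of `α ⊕ α` (block splitting along the qubit `q`). -/
def qSplit {α : Type*} (q : Fin 2) (x : α) : α ⊕ α :=
  if q = 0 then Sum.inl x else Sum.inr x

/-- The common index set for a `k`-qubit register split as
(qubits `1..m-1`) × (qubit `m`) × (qubits `m+1..m+n-1`) × (qubit `m+n`) ×
(qubits `m+n+1..k`). -/
@[reducible] def Tix (A B C : Type*) := A × Fin 2 × B × Fin 2 × C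

/-- Identification of `Tix` with the index set of `P₁⁽ᵐ⁾ ⊗ P₁⁽ⁿ⁾ ⊗ I_{2^{k-m-n}}`. -/
def fP {A B C : Type*} : Tix A B C → ((A × Fin 2) × (B × Fin 2)) × C :=
  fun ⟨pa, q1, pc, q2, pb⟩ => (((pa, q1), (pc, q2)), pb)

/-- Identification of `Tix` with the index set of
`U_{(k;m,m+n)} = I_{2^{m-1}} ⊗ fromBlocks (I_{2^{n-1}} ⊗ Uᵢⱼ) ⊗ I_{2^{k-m-n}}`. -/
def gU {A B C : Type*} : Tix A B C → (A × ((B × Fin 2) ⊕ (B × Fin 2))) × C :=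
  fun ⟨pa, q1, pc, q2, pb⟩ => ((pa, qSplit q1 (pc, q2)), pb)

/-- `U_{(k;m,m+n)} := I_{2^{m-1}} ⊗ fromBlocks U₁₁⁽ⁿ⁾ U₁₂⁽ⁿ⁾ U₂₁⁽ⁿ⁾ U₂₂⁽ⁿ⁾ ⊗ I_{2^{k-m-n}}`,
with `A⁽ⁿ⁾ = I_{2^{n-1}} ⊗ A`, viewed on the common index set `Tix`. -/
noncomputable def Ukmn (k m n : ℕ) (U11 U12 U21 U22 : Matrix (Fin 2) (Fin 2) ℂ) :
    Matrix (Tix (Fin (2 ^ (m - 1))) (Fin (2 ^ (n - 1))) (Fin (2 ^ (k - m - n))))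
      (Tix (Fin (2 ^ (m - 1))) (Fin (2 ^ (n - 1))) (Fin (2 ^ (k - m - n)))) ℂ :=
  ((1 : Matrix (Fin (2 ^ (m - 1))) (Fin (2 ^ (m - 1))) ℂ) ⊗ₖ
      Matrix.fromBlocks
        ((1 : Matrix (Fin (2 ^ (n - 1))) (Fin (2 ^ (n - 1))) ℂ) ⊗ₖ U11)
        ((1 : Matrix (Fin (2 ^ (n - 1))) (Fin (2 ^ (n - 1))) ℂ) ⊗ₖ U12)
        ((1 : Matrix (Fin (2 ^ (n - 1))) (Fin (2 ^ (n - 1))) ℂ) ⊗ₖ U21)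
        ((1 : Matrix (Fin (2 ^ (n - 1))) (Fin (2 ^ (n - 1))) ℂ) ⊗ₖ U22) ⊗ₖ
      (1 : Matrix (Fin (2 ^ (k - m - n))) (Fin (2 ^ (k - m - n))) ℂ)).submatrix gU gU


section Aux

open Matrix

lemma kron_conjTranspose {l m n p : Type*} (A : Matrix l m ℂ) (B : Matrix n p ℂ) :
    (A ⊗ₖ B)ᴴ = Aᴴ ⊗ₖ Bᴴ := by
  ext ⟨i, j⟩ ⟨k, l⟩
  simp [Matrix.conjTranspose_apply, mul_comm, Matrix.kroneckerMap_apply]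

/-- `gU` as an equivalence. -/
def gE {A B C : Type*} : Tix A B C ≃ (A × ((B × Fin 2) ⊕ (B × Fin 2))) × C where
  toFun := gU
  invFun := fun x => match x with
    | ((a, Sum.inl (b, q2)), c) => (a, 0, b, q2, c)
    | ((a, Sum.inr (b, q2)), c) => (a, 1, b, q2, c)
  left_inv := by
    rintro ⟨a, q1, b, q2, c⟩
    fin_cases q1 <;> simp [gU, qSplit]
  right_inv := by
    rintro ⟨⟨a, (⟨b, q2⟩ | ⟨b, q2⟩)⟩, c⟩ <;> simp [gU, qSplit]

lemma gU_eq_gE {A B C : Type*} : (gU : Tix A B C → _) = ⇑(gE : Tix A B C ≃ _) := rfl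

end Aux

set_option maxHeartbeats 1000000 in
/-- The probability computation of the multi-target quantum computational logic:
`Tr[(P₁⁽ᵐ⁾ ⊗ P₁⁽ⁿ⁾ ⊗ I) · U_{(k;m,m+n)} · ρ · U_{(k;m,m+n)}ᴴ] = Tr[(I ⊗ Λ_U⁽ⁿ⁺¹⁾ ⊗ I) · ρ]`
for every `2^k × 2^k` matrix `ρ`. -/
theorem prob_binaryGate (k m n : ℕ) (hm : 1 ≤ m) (hn : 1 ≤ n) (hk : m + n ≤ k)
    (U11 U12 U21 U22 : Matrix (Fin 2) (Fin 2) ℂ)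
    (ρ : Matrix (Tix (Fin (2 ^ (m - 1))) (Fin (2 ^ (n - 1))) (Fin (2 ^ (k - m - n))))
      (Tix (Fin (2 ^ (m - 1))) (Fin (2 ^ (n - 1))) (Fin (2 ^ (k - m - n)))) ℂ) :
    Matrix.trace
        (((((1 : Matrix (Fin (2 ^ (m - 1))) (Fin (2 ^ (m - 1))) ℂ) ⊗ₖ P1) ⊗ₖ
              ((1 : Matrix (Fin (2 ^ (n - 1))) (Fin (2 ^ (n - 1))) ℂ) ⊗ₖ P1) ⊗ₖ
              (1 : Matrix (Fin (2 ^ (k - m - n))) (Fin (2 ^ (k - m - n))) ℂ)).submatrix fP fP) *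
          Ukmn k m n U11 U12 U21 U22 * ρ * (Ukmn k m n U11 U12 U21 U22)ᴴ) =
      Matrix.trace
        ((((1 : Matrix (Fin (2 ^ (m - 1))) (Fin (2 ^ (m - 1))) ℂ) ⊗ₖ
            Matrix.fromBlocks
              ((1 : Matrix (Fin (2 ^ (n - 1))) (Fin (2 ^ (n - 1))) ℂ) ⊗ₖ (U21ᴴ * P1 * U21))
              ((1 : Matrix (Fin (2 ^ (n - 1))) (Fin (2 ^ (n - 1))) ℂ) ⊗ₖ (U21ᴴ * P1 * U22))
              ((1 : Matrix (Fin (2 ^ (n - 1))) (Fin (2 ^ (n - 1))) ℂ) ⊗ₖ (U22ᴴ * P1 * U21))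
              ((1 : Matrix (Fin (2 ^ (n - 1))) (Fin (2 ^ (n - 1))) ℂ) ⊗ₖ (U22ᴴ * P1 * U22)) ⊗ₖ
            (1 : Matrix (Fin (2 ^ (k - m - n))) (Fin (2 ^ (k - m - n))) ℂ)).submatrix gU gU) *
          ρ) := by
  
  classical
  -- rewrite the projection in gU coordinates
  have hP : ((((1 : Matrix (Fin (2 ^ (m - 1))) (Fin (2 ^ (m - 1))) ℂ) ⊗ₖ P1) ⊗ₖ
        ((1 : Matrix (Fin (2 ^ (n - 1))) (Fin (2 ^ (n - 1))) ℂ) ⊗ₖ P1) ⊗ₖ (1 : Matrix (Fin (2 ^ (k - m - n))) (Fin (2 ^ (k - m - n))) ℂ)).submatrix fP fP) =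
      (((1 : Matrix (Fin (2 ^ (m - 1))) (Fin (2 ^ (m - 1))) ℂ) ⊗ₖ
        Matrix.fromBlocks 0 0 0 ((1 : Matrix (Fin (2 ^ (n - 1))) (Fin (2 ^ (n - 1))) ℂ) ⊗ₖ P1) ⊗ₖ
        (1 : Matrix (Fin (2 ^ (k - m - n))) (Fin (2 ^ (k - m - n))) ℂ)).submatrix gU gU) := by
    ext ⟨a, q1, b, q2, c⟩ ⟨a', q1', b', q2', c'⟩
    fin_cases q1 <;> fin_cases q1' <;>
      simp [fP, gU, qSplit, P1, Matrix.submatrix_apply, Matrix.kroneckerMap_apply,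
        Matrix.single, Matrix.one_apply]
  set M : Matrix ((Fin (2 ^ (m - 1)) × ((Fin (2 ^ (n - 1)) × Fin 2) ⊕ (Fin (2 ^ (n - 1)) × Fin 2))) × Fin (2 ^ (k - m - n))) ((Fin (2 ^ (m - 1)) × ((Fin (2 ^ (n - 1)) × Fin 2) ⊕ (Fin (2 ^ (n - 1)) × Fin 2))) × Fin (2 ^ (k - m - n))) ℂ :=
    (1 : Matrix (Fin (2 ^ (m - 1))) (Fin (2 ^ (m - 1))) ℂ) ⊗ₖ
      Matrix.fromBlocks ((1 : Matrix (Fin (2 ^ (n - 1))) (Fin (2 ^ (n - 1))) ℂ) ⊗ₖ U11) ((1 : Matrix (Fin (2 ^ (n - 1))) (Fin (2 ^ (n - 1))) ℂ) ⊗ₖ U12)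
        ((1 : Matrix (Fin (2 ^ (n - 1))) (Fin (2 ^ (n - 1))) ℂ) ⊗ₖ U21) ((1 : Matrix (Fin (2 ^ (n - 1))) (Fin (2 ^ (n - 1))) ℂ) ⊗ₖ U22) ⊗ₖ (1 : Matrix (Fin (2 ^ (k - m - n))) (Fin (2 ^ (k - m - n))) ℂ) with hM
  set N : Matrix ((Fin (2 ^ (m - 1)) × ((Fin (2 ^ (n - 1)) × Fin 2) ⊕ (Fin (2 ^ (n - 1)) × Fin 2))) × Fin (2 ^ (k - m - n))) ((Fin (2 ^ (m - 1)) × ((Fin (2 ^ (n - 1)) × Fin 2) ⊕ (Fin (2 ^ (n - 1)) × Fin 2))) × Fin (2 ^ (k - m - n))) ℂ :=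
    (1 : Matrix (Fin (2 ^ (m - 1))) (Fin (2 ^ (m - 1))) ℂ) ⊗ₖ Matrix.fromBlocks 0 0 0 ((1 : Matrix (Fin (2 ^ (n - 1))) (Fin (2 ^ (n - 1))) ℂ) ⊗ₖ P1) ⊗ₖ
      (1 : Matrix (Fin (2 ^ (k - m - n))) (Fin (2 ^ (k - m - n))) ℂ) with hN
  have hU : Ukmn k m n U11 U12 U21 U22 = M.submatrix gE gE := rfl
  rw [hP, hU, gU_eq_gE]
  have key : Mᴴ * N * M =
      (1 : Matrix (Fin (2 ^ (m - 1))) (Fin (2 ^ (m - 1))) ℂ) ⊗ₖ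
        Matrix.fromBlocks ((1 : Matrix (Fin (2 ^ (n - 1))) (Fin (2 ^ (n - 1))) ℂ) ⊗ₖ (U21ᴴ * P1 * U21))
          ((1 : Matrix (Fin (2 ^ (n - 1))) (Fin (2 ^ (n - 1))) ℂ) ⊗ₖ (U21ᴴ * P1 * U22))
          ((1 : Matrix (Fin (2 ^ (n - 1))) (Fin (2 ^ (n - 1))) ℂ) ⊗ₖ (U22ᴴ * P1 * U21))
          ((1 : Matrix (Fin (2 ^ (n - 1))) (Fin (2 ^ (n - 1))) ℂ) ⊗ₖ (U22ᴴ * P1 * U22)) ⊗ₖ (1 : Matrix (Fin (2 ^ (k - m - n))) (Fin (2 ^ (k - m - n))) ℂ) := by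
    rw [hM, hN]
    simp only [kron_conjTranspose, Matrix.conjTranspose_one, Matrix.fromBlocks_conjTranspose,
      ← Matrix.mul_kronecker_mul, Matrix.one_mul, Matrix.mul_one, Matrix.fromBlocks_multiply,
      Matrix.mul_zero, Matrix.zero_mul, mul_zero, zero_mul,
      add_zero, zero_add]
  calc Matrix.trace (N.submatrix gE gE * M.submatrix gE gE * ρ * (M.submatrix gE gE)ᴴ)
      = Matrix.trace ((M.submatrix gE gE)ᴴ * (N.submatrix gE gE * M.submatrix gE gE * ρ)) := by
        rw [Matrix.trace_mul_comm]
    _ = Matrix.trace ((Mᴴ * N * M).submatrix gE gE * ρ) := by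
        rw [Matrix.conjTranspose_submatrix, ← Matrix.mul_assoc, ← Matrix.mul_assoc,
          Matrix.submatrix_mul_equiv, Matrix.submatrix_mul_equiv]
    _ = _ := by rw [key]
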